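/- Let R be a commutative Noetherian local ring which possesses a nonzero finitely generated injective R-module. Then R is an Artinian ring. -/

import Mathlib

open IsLocalRing

/-- Key divisibility consequence of injectivity (via a Baer-type argument):
if every annihilator of `b` kills `e`, then `e` is divisible by `b`. -/
lemma inj_div {R : Type} [CommRing R] {E : Type} [AddCommGroup E] [Module R E]
    (hE : Module.Injective R E) (b : R) (e : E)
    (hbe : ∀ x : R, x * b = 0 → x • e = 0) : ∃ u : E, e = b • u := by
  set μ : R →ₗ[R] R := LinearMap.toSpanSingleton R R b with hμ
  set f : (R ⧸ LinearMap.ker μ) →ₗ[R] R := (LinearMap.ker μ).liftQ μ le_rfl with hf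
  have hfinj : Function.Injective f := by
    rw [← LinearMap.ker_eq_bot]
    exact Submodule.ker_liftQ_eq_bot _ _ _ le_rfl
  have hle : LinearMap.ker μ ≤ LinearMap.ker (LinearMap.toSpanSingleton R E e) := by
    intro x hx
    rw [LinearMap.mem_ker, hμ, LinearMap.toSpanSingleton_apply, smul_eq_mul] at hx
    rw [LinearMap.mem_ker, LinearMap.toSpanSingleton_apply]
    exact hbe x hx
  set g : (R ⧸ LinearMap.ker μ) →ₗ[R] E :=
    (LinearMap.ker μ).liftQ (LinearMap.toSpanSingleton R E e) hle with hg
  obtain ⟨h, hh⟩ := hE.out f hfinj g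
  refine ⟨h 1, ?_⟩
  have h1 := hh (Submodule.Quotient.mk 1)
  have hfb : f (Submodule.Quotient.mk 1) = b := by
    rw [hf, Submodule.liftQ_apply, hμ, LinearMap.toSpanSingleton_apply, one_smul]
  have hgb : g (Submodule.Quotient.mk 1) = e := by
    rw [hg, Submodule.liftQ_apply, LinearMap.toSpanSingleton_apply, one_smul]
  rw [hfb, hgb] at h1
  calc e = h b := h1.symm
    _ = h (b • 1) := by rw [smul_eq_mul, mul_one]
    _ = b • h 1 := map_smul h b 1

/-- A Noetherian module over a local ring killed by a power of the maximal ideal is Artinian. -/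
lemma artinian_of_pow_smul_top_eq_bot (R : Type) [CommRing R] [IsLocalRing R] (k : ℕ) :
    ∀ (M : Type) [AddCommGroup M] [Module R M] [IsNoetherian R M],
      (maximalIdeal R ^ k • (⊤ : Submodule R M) = ⊥) → IsArtinian R M := by
  induction k with
  | zero =>
    intro M _ _ _ h
    rw [pow_zero, one_smul] at h
    have : Subsingleton M := by
      refine subsingleton_of_forall_eq 0 fun x ↦ ?_
      have hx : x ∈ (⊥ : Submodule R M) := h ▸ Submodule.mem_top
      simpa using hx
    infer_instance
  | succ k ih =>
    intro M _ _ _ h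
    set m : Ideal R := maximalIdeal R with hm
    set N : Submodule R M := m • ⊤ with hN
    have hNk : (m ^ k • (⊤ : Submodule R N) = ⊥) := by
      rw [Submodule.eq_bot_iff]
      intro z hz
      refine Submodule.smul_induction_on hz (fun r hr n _ ↦ ?_)
        (fun x y hx hy ↦ by rw [hx, hy, add_zero])
      have hmem : r • (n : M) ∈ m ^ k • N := Submodule.smul_mem_smul hr n.2
      have hb : m ^ k • N = (⊥ : Submodule R M) := by
        rw [hN, ← Submodule.smul_assoc, Ideal.smul_eq_mul, ← pow_succ]
        exact h
      rw [hb] at hmem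
      exact Subtype.ext (by simpa using hmem)
    have hArtN : IsArtinian R N := ih N hNk
    have tor : Module.IsTorsionBySet R (M ⧸ N) m :=
      Module.isTorsionBySet_quotient_ideal_smul M m
    letI : Module (R ⧸ m) (M ⧸ N) := tor.module
    haveI : IsScalarTower R (R ⧸ m) (M ⧸ N) := Module.IsTorsionBySet.isScalarTower tor
    haveI : Module.Finite R (M ⧸ N) :=
      Module.Finite.of_surjective N.mkQ (Submodule.mkQ_surjective N)
    haveI : Module.Finite (R ⧸ m) (M ⧸ N) :=
      Module.Finite.of_restrictScalars_finite R (R ⧸ m) (M ⧸ N)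
    letI : Field (R ⧸ m) := Ideal.Quotient.field m
    haveI hq : IsArtinian (R ⧸ m) (M ⧸ N) := isArtinian_of_fg_of_artinian'
    have emb : Submodule R (M ⧸ N) ↪o Submodule (R ⧸ m) (M ⧸ N) :=
      { toFun := fun p ↦
          { carrier := p
            add_mem' := fun ha hb ↦ p.add_mem ha hb
            zero_mem' := p.zero_mem
            smul_mem' := by rintro ⟨b⟩ x hx; exact p.smul_mem b hx }
        inj' := fun p q hpq ↦ SetLike.ext fun x ↦ SetLike.ext_iff.mp hpq x
        map_rel_iff' := Iff.rfl }
    have hArtQ : IsArtinian R (M ⧸ N) := ⟨emb.wellFounded IsWellFounded.wf⟩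
    exact (isArtinian_iff_submodule_quotient N).mpr ⟨hArtN, hArtQ⟩

/-- A commutative Noetherian local ring possessing a nonzero finitely
generated injective module is Artinian. -/
theorem stmt1 (R : Type) [CommRing R] [IsLocalRing R] [IsNoetherianRing R]
    (E : Type) [AddCommGroup E] [Module R E] [Nontrivial E] [Module.Finite R E]
    (hE : Module.Injective R E) :
    IsArtinianRing R := by
  have key := inj_div hE
  set m : Ideal R := maximalIdeal R with hm
  -- Step 1: every element of the maximal ideal has a power killing E.
  have step1 : ∀ a ∈ m, ∃ n : ℕ, ∀ e : E, a ^ n • e = 0 := by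
    intro a ha
    have hmono : Monotone fun n : ℕ ↦ LinearMap.ker (LinearMap.toSpanSingleton R R (a ^ n)) := by
      apply monotone_nat_of_le_succ
      intro n x hx
      rw [LinearMap.mem_ker, LinearMap.toSpanSingleton_apply, smul_eq_mul] at hx ⊢
      rw [pow_succ, ← mul_assoc, hx, zero_mul]
    obtain ⟨n, hn⟩ := monotone_stabilizes_iff_noetherian.mpr
      (inferInstance : IsNoetherian R R)
      ⟨fun n : ℕ ↦ LinearMap.ker (LinearMap.toSpanSingleton R R (a ^ n)), hmono⟩
    have hstab : LinearMap.ker (LinearMap.toSpanSingleton R R (a ^ n))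
        = LinearMap.ker (LinearMap.toSpanSingleton R R (a ^ (n + 1))) :=
      hn (n + 1) (Nat.le_succ n)
    refine ⟨n, fun e ↦ ?_⟩
    set N : Submodule R E := LinearMap.range (LinearMap.lsmul R E (a ^ n)) with hNdef
    have hNle : N ≤ m • N := by
      rintro _ ⟨e', rfl⟩
      have hyp : ∀ x : R, x * a ^ (n + 1) = 0 → x • (a ^ n • e') = 0 := by
        intro x hx
        have hx1 : x ∈ LinearMap.ker (LinearMap.toSpanSingleton R R (a ^ (n + 1))) := by
          rw [LinearMap.mem_ker, LinearMap.toSpanSingleton_apply, smul_eq_mul]; exact hx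
        rw [← hstab] at hx1
        rw [LinearMap.mem_ker, LinearMap.toSpanSingleton_apply, smul_eq_mul] at hx1
        rw [smul_smul, hx1, zero_smul]
      obtain ⟨u, hu⟩ := key (a ^ (n + 1)) (a ^ n • e') hyp
      have hmem : a ^ n • u ∈ N := ⟨u, rfl⟩
      have : LinearMap.lsmul R E (a ^ n) e' = a • (a ^ n • u) := by
        rw [LinearMap.lsmul_apply, hu, pow_succ', mul_smul]
      rw [this]
      exact Submodule.smul_mem_smul ha hmem
    have hfg : N.FG := IsNoetherian.noetherian N
    have hbot : N = ⊥ :=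
      Submodule.eq_bot_of_le_smul_of_le_jacobson_bot m N hfg hNle
        (by rw [IsLocalRing.jacobson_eq_maximalIdeal ⊥ bot_ne_top])
    have : a ^ n • e ∈ N := ⟨e, rfl⟩
    rw [hbot] at this
    simpa using this
  -- Step 2: `m` is an associated prime of `E`.
  obtain ⟨p, hp⟩ := associatedPrimes.nonempty R E
  obtain ⟨hprime, x0, hx0⟩ := isAssociatedPrime_iff.mp hp
  have hpm : p = m := by
    refine le_antisymm (IsLocalRing.le_maximalIdeal hprime.ne_top) ?_
    intro a ha
    obtain ⟨n, hkill⟩ := step1 a ha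
    have : a ^ n ∈ p := by
      rw [hx0, Submodule.mem_colon_singleton, Submodule.mem_bot]
      exact hkill x0
    exact hprime.mem_of_pow_mem n this
  have hx0ne : x0 ≠ 0 := by
    intro h0
    rw [h0] at hx0
    exact hprime.ne_top (hx0.trans (by ext r; simp [Submodule.mem_colon_singleton]))
  -- Step 3: every element of `m` is nilpotent.
  have step3 : ∀ a ∈ m, IsNilpotent a := by
    intro a ha
    obtain ⟨n, hkill⟩ := step1 a ha
    refine ⟨n, ?_⟩
    by_contra hne
    have hann : ∀ x : R, x * a ^ n = 0 → x • x0 = 0 := by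
      intro x hx
      have hxm : x ∈ m := by
        set J : Ideal R := LinearMap.ker (LinearMap.toSpanSingleton R R (a ^ n)) with hJ
        have hxJ : x ∈ J := by
          rw [hJ, LinearMap.mem_ker, LinearMap.toSpanSingleton_apply, smul_eq_mul]; exact hx
        have hJm : J ≤ m := by
          apply IsLocalRing.le_maximalIdeal
          intro htop
          have h1 : (1 : R) ∈ J := htop ▸ Submodule.mem_top
          rw [hJ, LinearMap.mem_ker, LinearMap.toSpanSingleton_apply, one_smul] at h1
          exact hne h1
        exact hJm hxJ
      rw [← hpm, hx0, Submodule.mem_colon_singleton, Submodule.mem_bot] at hxm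
      exact hxm
    obtain ⟨u, hu⟩ := key (a ^ n) x0 hann
    exact hx0ne (hu.trans (hkill u))
  -- Conclusion: the maximal ideal is the nilradical, hence nilpotent.
  have hmnil : m ≤ nilradical R := fun a ha ↦ mem_nilradical.mpr (step3 a ha)
  haveI : m.IsPrime := (maximalIdeal.isMaximal R).isPrime
  have hnilm : nilradical R ≤ m := nilradical_le_prime m
  obtain ⟨k, hk⟩ := IsNoetherianRing.isNilpotent_nilradical R
  have hmk : m ^ k = ⊥ := by
    rw [le_antisymm hmnil hnilm, hk]
    exact Submodule.zero_eq_bot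
  refine artinian_of_pow_smul_top_eq_bot R k R ?_
  rw [Ideal.smul_eq_mul, Ideal.mul_top, hmk]
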